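/- Let F be a functor from separable real C*-algebras to abelian groups that is homotopy invariant and half exact. Then F is split exact: every split short exact sequence 0 → A → B → C → 0 of separable real C*-algebras induces a split short exact sequence 0 → F(A) → F(B) → F(C) → 0. -/

import Mathlib

noncomputable section
open scoped unitInterval
open CategoryTheory

structure SepRCStar : Type 1 where
  carrier : Type
  [instNUNR : NonUnitalNormedRing carrier]
  [instStar : StarRing carrier]
  [instCStar : CStarRing carrier]
  [instNS : NormedSpace ℝ carrier]
  [instIST : IsScalarTower ℝ carrier carrier]
  [instSMCC : SMulCommClass ℝ carrier carrier]
  [instSM : StarModule ℝ carrier]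
  [instComplete : CompleteSpace carrier]
  [instSep : TopologicalSpace.SeparableSpace carrier]

attribute [instance] SepRCStar.instNUNR SepRCStar.instStar SepRCStar.instCStar
  SepRCStar.instNS SepRCStar.instIST SepRCStar.instSMCC SepRCStar.instSM
  SepRCStar.instComplete SepRCStar.instSep

instance : CoeSort SepRCStar Type := ⟨SepRCStar.carrier⟩

def RR : SepRCStar := ⟨ℝ⟩

def Cyl (B : SepRCStar) : SepRCStar :=
  @SepRCStar.mk C(I, B) _ _ _ _ _ _ _ _
    (by
      have : SecondCountableTopology B.carrier :=
        UniformSpace.secondCountable_of_separable B.carrier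
      infer_instance)

/-- A morphism of real C*-algebras: a continuous (bounded) real *-homomorphism. -/
structure RCHom (A B : SepRCStar) extends A →⋆ₙₐ[ℝ] B where
  cont : Continuous toNonUnitalStarAlgHom

instance {A B : SepRCStar} : FunLike (RCHom A B) A B where
  coe f := f.toNonUnitalStarAlgHom
  coe_injective f g h := by
    cases f; cases g
    simp only [RCHom.mk.injEq]
    exact DFunLike.coe_injective h

@[ext] theorem RCHom.ext {A B : SepRCStar} {f g : RCHom A B} (h : ∀ x, f x = g x) : f = g :=
  DFunLike.ext _ _ h

instance : Category SepRCStar where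
  Hom A B := RCHom A B
  id A := ⟨NonUnitalStarAlgHom.id ℝ A, continuous_id⟩
  comp f g := ⟨g.toNonUnitalStarAlgHom.comp f.toNonUnitalStarAlgHom, g.cont.comp f.cont⟩
  id_comp f := by apply RCHom.ext; intro x; rfl
  comp_id f := by apply RCHom.ext; intro x; rfl
  assoc f g h := by apply RCHom.ext; intro x; rfl

instance {A B : SepRCStar} : FunLike (A ⟶ B) A B :=
  inferInstanceAs (FunLike (RCHom A B) A B)

/-- evaluation at a point of the cylinder, as a morphism -/
def evC (B : SepRCStar) (t : I) : Cyl B ⟶ B where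
  toFun f := (show C(I, B.carrier) from f) t
  map_smul' _ _ := rfl
  map_zero' := rfl
  map_add' _ _ := rfl
  map_mul' _ _ := rfl
  map_star' _ := rfl
  cont := show Continuous (fun f : C(I, B.carrier) => f t) from
    ContinuousEvalConst.continuous_eval_const t

/-- Two morphisms are homotopic if they are connected by a path of morphisms,
i.e. by a morphism into the cylinder algebra `C([0,1], B)`. -/
def Homotopic {A B : SepRCStar} (f g : A ⟶ B) : Prop :=
  ∃ H : A ⟶ Cyl B, H ≫ evC B 0 = f ∧ H ≫ evC B 1 = g

/-! ### Functors from separable real C*-algebras to abelian groups -/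

/-- A functor from separable real C*-algebras to abelian groups. -/
abbrev AbFun := SepRCStar ⥤ AddCommGrpCat.{0}

/-- `F` is homotopy invariant if homotopic *-homomorphisms induce equal maps. -/
def HomotopyInvariant (F : AbFun) : Prop :=
  ∀ {A B : SepRCStar} (f g : A ⟶ B), Homotopic f g → F.map f = F.map g

/-- The data of the stabilization functor `A ↦ K ⊗ A` together with the corner
inclusion `A → K ⊗ A` induced by a rank-one projection. -/
structure StabData : Type 1 where
  stab : SepRCStar → SepRCStar
  incl : ∀ A : SepRCStar, A ⟶ stab A

/-- `F` is stable if the corner inclusion `A → K ⊗ A` induces an isomorphism. -/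
def Stable (St : StabData) (F : AbFun) : Prop :=
  ∀ A : SepRCStar, Function.Bijective (F.map (St.incl A))

/-- A short exact sequence `0 → A → B → C → 0` of separable real C*-algebras. -/
structure SES : Type 1 where
  fst : SepRCStar
  snd : SepRCStar
  trd : SepRCStar
  f : fst ⟶ snd
  g : snd ⟶ trd
  inj : Function.Injective ⇑f
  surj : Function.Surjective ⇑g
  exactness : ∀ b, g b = 0 ↔ b ∈ Set.range ⇑f

/-- A split short exact sequence. -/
def SES.IsSplit (E : SES) : Prop := ∃ s : E.trd ⟶ E.snd, s ≫ E.g = 𝟙 E.trd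

/-- `F` is half exact if every short exact sequence induces an exact sequence
`F(A) → F(B) → F(C)`. -/
def HalfExact (F : AbFun) : Prop :=
  ∀ E : SES, Function.Exact (F.map E.f) (F.map E.g)

/-- `F` is split exact if every split short exact sequence induces a split short
exact sequence `0 → F(A) → F(B) → F(C) → 0` of abelian groups. -/
def SplitExactF (F : AbFun) : Prop :=
  ∀ E : SES, E.IsSplit →
    Function.Injective (F.map E.f) ∧ Function.Surjective (F.map E.g) ∧
    Function.Exact (F.map E.f) (F.map E.g) ∧
    ∃ sec : F.obj E.trd ⟶ F.obj E.snd, sec ≫ F.map E.g = 𝟙 (F.obj E.trd)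

/-! ### An axiomatization of (graded) Kasparov KK-theory for real C*-algebras -/

/-- The data and formal properties of graded real KK-theory:  abelian groups
`KK_n(A,B)`, classes `[f] ∈ KK_0(A,B)` of morphisms, and the associative
bilinear Kasparov intersection product, which is homotopy invariant. -/
structure GKK : Type 2 where
  KK : ℤ → SepRCStar → SepRCStar → Type
  [instAdd : ∀ n A B, AddCommGroup (KK n A B)]
  kkOf : ∀ {A B : SepRCStar}, (A ⟶ B) → KK 0 A B
  comp : ∀ {m n : ℤ} {A B C : SepRCStar}, KK m A B → KK n B C → KK (m + n) A C
  comp_add_left : ∀ {m n : ℤ} {A B C : SepRCStar} (x y : KK m A B) (z : KK n B C),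
    comp (x + y) z = comp x z + comp y z
  comp_add_right : ∀ {m n : ℤ} {A B C : SepRCStar} (x : KK m A B) (y z : KK n B C),
    comp x (y + z) = comp x y + comp x z
  comp_assoc : ∀ {m n k : ℤ} {A B C D : SepRCStar} (x : KK m A B) (y : KK n B C) (z : KK k C D),
    HEq (comp (comp x y) z) (comp x (comp y z))
  comp_one : ∀ {m : ℤ} {A B : SepRCStar} (x : KK m A B), HEq (comp x (kkOf (𝟙 B))) x
  one_comp : ∀ {m : ℤ} {A B : SepRCStar} (x : KK m A B), HEq (comp (kkOf (𝟙 A)) x) x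
  kkOf_comp : ∀ {A B C : SepRCStar} (f : A ⟶ B) (g : B ⟶ C),
    HEq (kkOf (f ≫ g)) (comp (kkOf f) (kkOf g))
  kkOf_htpy : ∀ {A B : SepRCStar} (f g : A ⟶ B), Homotopic f g → kkOf f = kkOf g

attribute [instance] GKK.instAdd

namespace GKK

variable (K : GKK)

/-- transport along an equality of degrees -/
def castK {m m' : ℤ} {A B : SepRCStar} (h : m = m') (x : K.KK m A B) : K.KK m' A B :=
  cast (congrArg (fun i => K.KK i A B) h) x

/-- the Kasparov product, normalized to a specified degree -/
def cmp {m n k : ℤ} {A B C : SepRCStar} (h : m + n = k) (x : K.KK m A B) (y : K.KK n B C) :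
    K.KK k A C :=
  K.castK h (K.comp x y)

/-- the (degree-zero) Kasparov product -/
def comp0 {A B C : SepRCStar} (x : K.KK 0 A B) (y : K.KK 0 B C) : K.KK 0 A C :=
  K.cmp (add_zero 0) x y

/-- pullback of a KK-element along a morphism -/
def pull {n : ℤ} {A' A B : SepRCStar} (f : A' ⟶ A) (y : K.KK n A B) : K.KK n A' B :=
  K.cmp (zero_add n) (K.kkOf f) y

/-- pushforward of a KK-element along a morphism -/
def push {n : ℤ} {A B B' : SepRCStar} (g : B ⟶ B') (y : K.KK n A B) : K.KK n A B' :=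
  K.cmp (add_zero n) y (K.kkOf g)

/-- `A` and `B` are KK-equivalent. -/
def KKEquivalent (A B : SepRCStar) : Prop :=
  ∃ (x : K.KK 0 A B) (y : K.KK 0 B A),
    K.comp0 x y = K.kkOf (𝟙 A) ∧ K.comp0 y x = K.kkOf (𝟙 B)

end GKK

/-! ### Suspensions -/

/-- The data of the suspension functor `SA = C₀(ℝ, A)` and the inverse suspension
functor `S⁻¹A = { f ∈ C₀(ℝ, ℂ ⊗ A) : f(-x) = conj (f x) }`. -/
structure SuspData : Type 1 where
  susp : SepRCStar → SepRCStar
  isusp : SepRCStar → SepRCStar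
  suspMap : ∀ {A B : SepRCStar}, (A ⟶ B) → (susp A ⟶ susp B)
  isuspMap : ∀ {A B : SepRCStar}, (A ⟶ B) → (isusp A ⟶ isusp B)
  suspMap_id : ∀ A : SepRCStar, suspMap (𝟙 A) = 𝟙 (susp A)
  isuspMap_id : ∀ A : SepRCStar, isuspMap (𝟙 A) = 𝟙 (isusp A)
  suspMap_comp : ∀ {A B C : SepRCStar} (f : A ⟶ B) (g : B ⟶ C),
    suspMap (f ≫ g) = suspMap f ≫ suspMap g
  isuspMap_comp : ∀ {A B C : SepRCStar} (f : A ⟶ B) (g : B ⟶ C),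
    isuspMap (f ≫ g) = isuspMap f ≫ isuspMap g

namespace SuspData

/-- iterated suspension -/
def npow (S : SuspData) : ℕ → SepRCStar → SepRCStar
  | 0, A => A
  | k+1, A => npow S k (S.susp A)

/-- iterated inverse suspension -/
def inpow (S : SuspData) : ℕ → SepRCStar → SepRCStar
  | 0, A => A
  | k+1, A => inpow S k (S.isusp A)

/-- `SⁿA` for `n ∈ ℤ`. -/
def pow (S : SuspData) : ℤ → SepRCStar → SepRCStar
  | Int.ofNat k, A => npow S k A
  | Int.negSucc k, A => inpow S (k+1) A

def npowMap (S : SuspData) : ∀ (k : ℕ) {A B : SepRCStar}, (A ⟶ B) → (npow S k A ⟶ npow S k B)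
  | 0, _, _, f => f
  | k+1, _, _, f => npowMap S k (S.suspMap f)

def inpowMap (S : SuspData) : ∀ (k : ℕ) {A B : SepRCStar}, (A ⟶ B) → (inpow S k A ⟶ inpow S k B)
  | 0, _, _, f => f
  | k+1, _, _, f => inpowMap S k (S.isuspMap f)

/-- `Sⁿf` for `n ∈ ℤ`. -/
def powMap (S : SuspData) : ∀ (n : ℤ) {A B : SepRCStar}, (A ⟶ B) → (pow S n A ⟶ pow S n B)
  | Int.ofNat k, _, _, f => npowMap S k f
  | Int.negSucc k, _, _, f => inpowMap S (k+1) f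

theorem npowMap_id (S : SuspData) : ∀ (k : ℕ) (A : SepRCStar),
    npowMap S k (𝟙 A) = 𝟙 (npow S k A)
  | 0, _ => rfl
  | k+1, A => by rw [npowMap, S.suspMap_id, npowMap_id S k]; rfl

theorem inpowMap_id (S : SuspData) : ∀ (k : ℕ) (A : SepRCStar),
    inpowMap S k (𝟙 A) = 𝟙 (inpow S k A)
  | 0, _ => rfl
  | k+1, A => by rw [inpowMap, S.isuspMap_id, inpowMap_id S k]; rfl

theorem npowMap_comp (S : SuspData) : ∀ (k : ℕ) {A B C : SepRCStar} (f : A ⟶ B) (g : B ⟶ C),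
    npowMap S k (f ≫ g) = npowMap S k f ≫ npowMap S k g
  | 0, _, _, _, _, _ => rfl
  | k+1, A, B, C, f, g => by rw [npowMap, S.suspMap_comp, npowMap_comp S k]; rfl

theorem inpowMap_comp (S : SuspData) : ∀ (k : ℕ) {A B C : SepRCStar} (f : A ⟶ B) (g : B ⟶ C),
    inpowMap S k (f ≫ g) = inpowMap S k f ≫ inpowMap S k g
  | 0, _, _, _, _, _ => rfl
  | k+1, A, B, C, f, g => by rw [inpowMap, S.isuspMap_comp, inpowMap_comp S k]; rfl

/-- `Sⁿ` as a functor. -/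
def powFun (S : SuspData) (n : ℤ) : SepRCStar ⥤ SepRCStar where
  obj := pow S n
  map := powMap S n
  map_id A := by cases n with
    | ofNat k => exact npowMap_id S k A
    | negSucc k => exact inpowMap_id S (k+1) A
  map_comp f g := by cases n with
    | ofNat k => exact npowMap_comp S k f g
    | negSucc k => exact inpowMap_comp S (k+1) f g

end SuspData

/-- transport of elements of `F` along an equality of algebras -/
def castF (F : AbFun) {X Y : SepRCStar} (h : X = Y) (x : F.obj X) : F.obj Y :=
  cast (congrArg (fun Z => ((F.obj Z : Type))) h) x

/-- `F` is continuous: it preserves countable inductive limits (colimits of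
sequences) of separable real C*-algebras, in every degree. -/
def ContinuousFun (S : SuspData) (F : AbFun) : Prop :=
  ∀ (D : ℕ ⥤ SepRCStar) (c : CategoryTheory.Limits.Cocone D),
    Nonempty (CategoryTheory.Limits.IsColimit c) →
    ∀ n : ℤ, Nonempty (CategoryTheory.Limits.IsColimit ((S.powFun n ⋙ F).mapCocone c))

/-! ### Pairings between a functor and KK-theory -/

/-- An (ungraded) pairing `F(A) ⊗ KK(A,B) → F(B)`. -/
def UPairing (K : GKK) (F : AbFun) : Type 1 :=
  ∀ (A B : SepRCStar), F.obj A → K.KK 0 A B → F.obj B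

/-- The conditions for `α` to be a natural (bi-additive) pairing with `α(x ⊗ 1_A) = x`. -/
structure IsUPairing (K : GKK) (F : AbFun) (α : UPairing K F) : Prop where
  add_left : ∀ A B (x y : F.obj A) (z : K.KK 0 A B), α A B (x + y) z = α A B x z + α A B y z
  add_right : ∀ A B (x : F.obj A) (z w : K.KK 0 A B),
    α A B x (z + w) = α A B x z + α A B x w
  natA : ∀ (A' A B : SepRCStar) (f : A' ⟶ A) (x : F.obj A') (y : K.KK 0 A B),
    α A B (F.map f x) y = α A' B x (K.pull f y)
  natB : ∀ (A B B' : SepRCStar) (g : B ⟶ B') (x : F.obj A) (y : K.KK 0 A B),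
    α A B' x (K.push g y) = F.map g (α A B x y)
  unit : ∀ A (x : F.obj A), α A A x (K.kkOf (𝟙 A)) = x

/-- A graded pairing `F_*(A) ⊗ KK_*(A,B) → F_*(B)`, where `F_n(A) = F(SⁿA)` and
`KK_n(A,B)` is graded KK-theory. -/
def GPairing (K : GKK) (S : SuspData) (F : AbFun) : Type 1 :=
  ∀ (m n : ℤ) (A B : SepRCStar), F.obj (S.pow m A) → K.KK n A B → F.obj (S.pow (m + n) B)

/-- The conditions for a graded pairing to be natural, bi-additive, unital and
associative for the Kasparov product. -/
structure IsGPairing (K : GKK) (S : SuspData) (F : AbFun) (α : GPairing K S F) : Prop where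
  add_left : ∀ m n A B (x y : F.obj (S.pow m A)) (z : K.KK n A B),
    α m n A B (x + y) z = α m n A B x z + α m n A B y z
  add_right : ∀ m n A B (x : F.obj (S.pow m A)) (z w : K.KK n A B),
    α m n A B x (z + w) = α m n A B x z + α m n A B x w
  natA : ∀ m n (A' A B : SepRCStar) (f : A' ⟶ A) (x : F.obj (S.pow m A')) (y : K.KK n A B),
    α m n A B (F.map (S.powMap m f) x) y = α m n A' B x (K.pull f y)
  natB : ∀ m n (A B B' : SepRCStar) (g : B ⟶ B') (x : F.obj (S.pow m A)) (y : K.KK n A B),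
    α m n A B' x (K.push g y) = F.map (S.powMap (m + n) g) (α m n A B x y)
  unit : ∀ m A (x : F.obj (S.pow m A)), HEq (α m 0 A A x (K.kkOf (𝟙 A))) x
  assoc : ∀ m n k (A B C : SepRCStar) (x : F.obj (S.pow m A)) (y : K.KK n A B) (z : K.KK k B C),
    HEq (α (m + n) k B C (α m n A B x y) z) (α m (n + k) A C x (K.comp y z))

/-- the action of a graded KK-element on `F_*`, normalized to a specified degree -/
def actF {K : GKK} {S : SuspData} {F : AbFun} (α : GPairing K S F) {n d k : ℤ}
    {B C : SepRCStar} (y : K.KK d B C) (h : n + d = k) (x : F.obj (S.pow n B)) :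
    F.obj (S.pow k C) :=
  castF F (congrArg (fun i => S.pow i C) h) (α n d B C x y)


/-! ### Auxiliary infrastructure for the proof -/

namespace SplitAux

theorem happly_comp {A B C : SepRCStar} (u : A ⟶ B) (v : B ⟶ C) (x : A) :
    (u ≫ v) x = v (u x) := rfl

theorem happly_id {A : SepRCStar} (x : A) : (𝟙 A) x = x := rfl

theorem hmap_add {A B : SepRCStar} (φ : A ⟶ B) (x y : A.carrier) :
    φ (x + y) = φ x + φ y := map_add φ.toNonUnitalStarAlgHom x y

theorem hmap_zero {A B : SepRCStar} (φ : A ⟶ B) : φ 0 = 0 :=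
  map_zero φ.toNonUnitalStarAlgHom

theorem hmap_sub {A B : SepRCStar} (φ : A ⟶ B) (x y : A.carrier) :
    φ (x - y) = φ x - φ y := map_sub φ.toNonUnitalStarAlgHom x y

theorem hmap_smul {A B : SepRCStar} (φ : A ⟶ B) (r : ℝ) (x : A.carrier) :
    φ (r • x) = r • φ x := map_smul φ.toNonUnitalStarAlgHom r x

theorem hmap_mul {A B : SepRCStar} (φ : A ⟶ B) (x y : A.carrier) :
    φ (x * y) = φ x * φ y := map_mul φ.toNonUnitalStarAlgHom x y

theorem hmap_star {A B : SepRCStar} (φ : A ⟶ B) (x : A.carrier) :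
    φ (star x) = star (φ x) := map_star φ.toNonUnitalStarAlgHom x

/-- The C*-algebra determined by a closed star subalgebra. -/
def subAlg (X : SepRCStar) (S : NonUnitalStarSubalgebra ℝ X.carrier)
    (hS : IsClosed (S : Set X.carrier)) : SepRCStar :=
  letI : CStarRing S := ⟨fun x => @CStarRing.norm_mul_self_le X.carrier _ _ _ (x : X.carrier)⟩
  letI : CompleteSpace S := hS.completeSpace_coe
  haveI : SecondCountableTopology X.carrier := UniformSpace.secondCountable_of_separable _
  @SepRCStar.mk S _ _ _ _ _ _ _ _ _

/-- The inclusion of a closed star subalgebra. -/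
def subIncl (X : SepRCStar) (S : NonUnitalStarSubalgebra ℝ X.carrier)
    (hS : IsClosed (S : Set X.carrier)) : subAlg X S hS ⟶ X :=
  { NonUnitalStarSubalgebraClass.subtype S with cont := continuous_subtype_val }

/-- Corestriction of a morphism to a closed star subalgebra containing the range. -/
def subCorestrict {A X : SepRCStar} (φ : A ⟶ X) (S : NonUnitalStarSubalgebra ℝ X.carrier)
    (hS : IsClosed (S : Set X.carrier)) (h : ∀ a, φ a ∈ S) : A ⟶ subAlg X S hS :=
  { NonUnitalStarAlgHom.codRestrict φ.toNonUnitalStarAlgHom S h with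
    cont := φ.cont.subtype_mk h }

theorem subCorestrict_incl {A X : SepRCStar} (φ : A ⟶ X) (S : NonUnitalStarSubalgebra ℝ X.carrier)
    (hS : IsClosed (S : Set X.carrier)) (h : ∀ a, φ a ∈ S) :
    subCorestrict φ S hS h ≫ subIncl X S hS = φ := RCHom.ext fun _ => rfl

end SplitAux
namespace SplitAux

/-- The zero C*-algebra. -/
def Z0 : SepRCStar :=
  subAlg RR ⊥ (by
    rw [show ((⊥ : NonUnitalStarSubalgebra ℝ RR.carrier) : Set RR.carrier) = {0} from
      NonUnitalStarAlgebra.coe_bot]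
    exact isClosed_singleton)

theorem z0_eq_zero (x : Z0) : x = 0 :=
  Subtype.ext (NonUnitalStarAlgebra.mem_bot.mp x.2)

/-- The zero morphism into the zero algebra. -/
def zto (X : SepRCStar) : X ⟶ Z0 where
  toFun _ := 0
  map_smul' r _ := (smul_zero r).symm
  map_zero' := rfl
  map_add' _ _ := (add_zero 0).symm
  map_mul' _ _ := (mul_zero 0).symm
  map_star' _ := (star_zero _).symm
  cont := continuous_const

/-- The zero morphism out of the zero algebra. -/
def zfrom (Y : SepRCStar) : Z0 ⟶ Y where
  toFun _ := 0
  map_smul' r _ := (smul_zero r).symm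
  map_zero' := rfl
  map_add' _ _ := (add_zero 0).symm
  map_mul' _ _ := (mul_zero 0).symm
  map_star' _ := (star_zero _).symm
  cont := continuous_const

variable (F : AbFun)

theorem F_comp_apply {A B C : SepRCStar} (u : A ⟶ B) (v : B ⟶ C) (x : F.obj A) :
    F.map (u ≫ v) x = F.map v (F.map u x) := by rw [F.map_comp]; rfl

theorem F_id_apply {A : SepRCStar} (x : F.obj A) : F.map (𝟙 A) x = x := by
  rw [F.map_id]; rfl

/-- The identity short exact sequence of the zero algebra. -/
def sesZ0 : SES where
  fst := Z0
  snd := Z0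
  trd := Z0
  f := 𝟙 Z0
  g := 𝟙 Z0
  inj := fun _ _ h => h
  surj := fun x => ⟨x, rfl⟩
  exactness := fun b => ⟨fun _ => ⟨b, rfl⟩, fun _ => by
    rw [happly_id, z0_eq_zero b]⟩

theorem F_Z0_trivial (hhalf : HalfExact F) (x : F.obj Z0) : x = 0 := by
  have h := (hhalf sesZ0 x).mpr ⟨x, F_id_apply F x⟩
  calc x = F.map (𝟙 Z0) x := (F_id_apply F x).symm
  _ = 0 := h

theorem F_through_zero (hhalf : HalfExact F) {X Y : SepRCStar} (u : X ⟶ Z0) (v : Z0 ⟶ Y)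
    (x : F.obj X) : F.map (u ≫ v) x = 0 := by
  rw [F_comp_apply, F_Z0_trivial F hhalf (F.map u x), map_zero]

end SplitAux
namespace SplitAux

section Main

variable (E : SES)

/-- the kernel of `g` as a subalgebra of `B` -/
def Aker : NonUnitalStarSubalgebra ℝ E.snd.carrier where
  carrier := {b | E.g b = 0}
  add_mem' := fun {a b} (ha : E.g a = 0) (hb : E.g b = 0) => by
    show E.g (a + b) = 0
    rw [hmap_add, ha, hb, add_zero]
  zero_mem' := hmap_zero E.g
  mul_mem' := fun {a b} (ha : E.g a = 0) (hb : E.g b = 0) => by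
    show E.g (a * b) = 0
    rw [hmap_mul, ha, zero_mul]
  smul_mem' := fun r a (ha : E.g a = 0) => by
    show E.g (r • a) = 0
    rw [hmap_smul, ha, smul_zero]
  star_mem' := fun {a} (ha : E.g a = 0) => by
    show E.g (star a) = 0
    rw [hmap_star, ha, star_zero]

theorem Aker_closed : IsClosed ((Aker E : Set E.snd.carrier)) :=
  isClosed_eq E.g.cont continuous_const

def AA : SepRCStar := subAlg E.snd (Aker E) (Aker_closed E)

def inclA : AA E ⟶ E.snd := subIncl E.snd (Aker E) (Aker_closed E)

def fres : E.fst ⟶ AA E :=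
  subCorestrict E.f (Aker E) (Aker_closed E) fun a => (E.exactness (E.f a)).mpr ⟨a, rfl⟩

theorem fres_incl : fres E ≫ inclA E = E.f := RCHom.ext fun _ => rfl

/-- `D`: paths in `B` ending in `ker g`. -/
def Dsub : NonUnitalStarSubalgebra ℝ C(I, E.snd.carrier) where
  carrier := {h | E.g (h 1) = 0}
  add_mem' := fun {a b} (ha : E.g (a 1) = 0) (hb : E.g (b 1) = 0) => by
    show E.g ((a + b) 1) = 0
    rw [ContinuousMap.add_apply, hmap_add, ha, hb, add_zero]
  zero_mem' := by
    show E.g ((0 : C(I, E.snd.carrier)) 1) = 0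
    rw [ContinuousMap.zero_apply]; exact hmap_zero E.g
  mul_mem' := fun {a b} ha hb => by
    show E.g ((a * b) 1) = 0
    rw [ContinuousMap.mul_apply, hmap_mul, ha, zero_mul]
  smul_mem' := fun r a ha => by
    show E.g ((r • a) 1) = 0
    rw [ContinuousMap.smul_apply, hmap_smul, ha, smul_zero]
  star_mem' := fun {a} ha => by
    show E.g ((star a) 1) = 0
    rw [ContinuousMap.star_apply, hmap_star, ha, star_zero]

theorem Dsub_closed : IsClosed ((Dsub E : Set C(I, E.snd.carrier))) :=
  isClosed_eq (E.g.cont.comp (ContinuousEvalConst.continuous_eval_const 1)) continuous_const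

def DD : SepRCStar := subAlg (Cyl E.snd) (Dsub E) (Dsub_closed E)

/-- `N`: paths in `B` starting at `0` and ending in `ker g`. -/
def Nsub : NonUnitalStarSubalgebra ℝ C(I, E.snd.carrier) where
  carrier := {h | h 0 = 0 ∧ E.g (h 1) = 0}
  add_mem' := fun {a b} ha hb => by
    refine ⟨?_, ?_⟩
    · show (a + b) 0 = 0
      rw [ContinuousMap.add_apply, ha.1, hb.1, add_zero]
    · show E.g ((a + b) 1) = 0
      rw [ContinuousMap.add_apply, hmap_add, ha.2, hb.2, add_zero]
  zero_mem' := ⟨rfl, by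
    show E.g ((0 : C(I, E.snd.carrier)) 1) = 0
    rw [ContinuousMap.zero_apply]; exact hmap_zero E.g⟩
  mul_mem' := fun {a b} ha hb => by
    refine ⟨?_, ?_⟩
    · show (a * b) 0 = 0
      rw [ContinuousMap.mul_apply, ha.1, zero_mul]
    · show E.g ((a * b) 1) = 0
      rw [ContinuousMap.mul_apply, hmap_mul, ha.2, zero_mul]
  smul_mem' := fun r a ha => by
    refine ⟨?_, ?_⟩
    · show (r • a) 0 = 0
      rw [ContinuousMap.smul_apply, ha.1, smul_zero]
    · show E.g ((r • a) 1) = 0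
      rw [ContinuousMap.smul_apply, hmap_smul, ha.2, smul_zero]
  star_mem' := fun {a} ha => by
    refine ⟨?_, ?_⟩
    · show (star a) 0 = 0
      rw [ContinuousMap.star_apply, ha.1, star_zero]
    · show E.g ((star a) 1) = 0
      rw [ContinuousMap.star_apply, hmap_star, ha.2, star_zero]

theorem Nsub_closed : IsClosed ((Nsub E : Set C(I, E.snd.carrier))) := by
  have h : (Nsub E : Set C(I, E.snd.carrier)) =
      {h : C(I, E.snd.carrier) | h 0 = 0} ∩ {h | E.g (h 1) = 0} := Set.ext fun _ => Iff.rfl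
  rw [h]
  exact (isClosed_eq (ContinuousEvalConst.continuous_eval_const 0) continuous_const).inter
    (isClosed_eq (E.g.cont.comp (ContinuousEvalConst.continuous_eval_const 1)) continuous_const)

def NN : SepRCStar := subAlg (Cyl E.snd) (Nsub E) (Nsub_closed E)

/-- the cone: paths in `ker g` starting at `0`. -/
def CAsub : NonUnitalStarSubalgebra ℝ C(I, E.snd.carrier) where
  carrier := {h | h 0 = 0 ∧ ∀ t, E.g (h t) = 0}
  add_mem' := fun {a b} ha hb => by
    refine ⟨?_, fun t => ?_⟩
    · show (a + b) 0 = 0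
      rw [ContinuousMap.add_apply, ha.1, hb.1, add_zero]
    · show E.g ((a + b) t) = 0
      rw [ContinuousMap.add_apply, hmap_add, ha.2 t, hb.2 t, add_zero]
  zero_mem' := ⟨rfl, fun t => by
    show E.g ((0 : C(I, E.snd.carrier)) t) = 0
    rw [ContinuousMap.zero_apply]; exact hmap_zero E.g⟩
  mul_mem' := fun {a b} ha hb => by
    refine ⟨?_, fun t => ?_⟩
    · show (a * b) 0 = 0
      rw [ContinuousMap.mul_apply, ha.1, zero_mul]
    · show E.g ((a * b) t) = 0
      rw [ContinuousMap.mul_apply, hmap_mul, ha.2 t, zero_mul]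
  smul_mem' := fun r a ha => by
    refine ⟨?_, fun t => ?_⟩
    · show (r • a) 0 = 0
      rw [ContinuousMap.smul_apply, ha.1, smul_zero]
    · show E.g ((r • a) t) = 0
      rw [ContinuousMap.smul_apply, hmap_smul, ha.2 t, smul_zero]
  star_mem' := fun {a} ha => by
    refine ⟨?_, fun t => ?_⟩
    · show (star a) 0 = 0
      rw [ContinuousMap.star_apply, ha.1, star_zero]
    · show E.g ((star a) t) = 0
      rw [ContinuousMap.star_apply, hmap_star, ha.2 t, star_zero]

theorem CAsub_closed : IsClosed ((CAsub E : Set C(I, E.snd.carrier))) := by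
  have h : (CAsub E : Set C(I, E.snd.carrier)) =
      {h : C(I, E.snd.carrier) | h 0 = 0} ∩ ⋂ t : I, {h | E.g (h t) = 0} := by
    ext h
    simp only [Set.mem_inter_iff, Set.mem_iInter, Set.mem_setOf_eq]
    exact Iff.rfl
  rw [h]
  exact (isClosed_eq (ContinuousEvalConst.continuous_eval_const 0) continuous_const).inter
    (isClosed_iInter fun t =>
      isClosed_eq (E.g.cont.comp (ContinuousEvalConst.continuous_eval_const t)) continuous_const)

def CA0 : SepRCStar := subAlg (Cyl E.snd) (CAsub E) (CAsub_closed E)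

/-- the suspension of `C`: loops in `C` based at `0`. -/
def SCsub : NonUnitalStarSubalgebra ℝ C(I, E.trd.carrier) where
  carrier := {h | h 0 = 0 ∧ h 1 = 0}
  add_mem' := fun {a b} ha hb => by
    refine ⟨?_, ?_⟩
    · show (a + b) 0 = 0
      rw [ContinuousMap.add_apply, ha.1, hb.1, add_zero]
    · show (a + b) 1 = 0
      rw [ContinuousMap.add_apply, ha.2, hb.2, add_zero]
  zero_mem' := ⟨rfl, rfl⟩
  mul_mem' := fun {a b} ha hb => by
    refine ⟨?_, ?_⟩
    · show (a * b) 0 = 0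
      rw [ContinuousMap.mul_apply, ha.1, zero_mul]
    · show (a * b) 1 = 0
      rw [ContinuousMap.mul_apply, ha.2, zero_mul]
  smul_mem' := fun r a ha => by
    refine ⟨?_, ?_⟩
    · show (r • a) 0 = 0
      rw [ContinuousMap.smul_apply, ha.1, smul_zero]
    · show (r • a) 1 = 0
      rw [ContinuousMap.smul_apply, ha.2, smul_zero]
  star_mem' := fun {a} ha => by
    refine ⟨?_, ?_⟩
    · show (star a) 0 = 0
      rw [ContinuousMap.star_apply, ha.1, star_zero]
    · show (star a) 1 = 0
      rw [ContinuousMap.star_apply, ha.2, star_zero]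

theorem SCsub_closed : IsClosed ((SCsub E : Set C(I, E.trd.carrier))) := by
  have h : (SCsub E : Set C(I, E.trd.carrier)) =
      {h : C(I, E.trd.carrier) | h 0 = 0} ∩ {h | h 1 = 0} := Set.ext fun _ => Iff.rfl
  rw [h]
  exact (isClosed_eq (ContinuousEvalConst.continuous_eval_const 0) continuous_const).inter
    (isClosed_eq (ContinuousEvalConst.continuous_eval_const 1) continuous_const)

def SC : SepRCStar := subAlg (Cyl E.trd) (SCsub E) (SCsub_closed E)

end Main

end SplitAux
namespace SplitAux

/-- identity with definitional unfolding of `(Cyl X).carrier` -/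
def toCM {X : SepRCStar} (h : (Cyl X).carrier) : C(I, X.carrier) := h

def constHomAux (X : SepRCStar) : X.carrier →⋆ₙₐ[ℝ] C(I, X.carrier) where
  toFun x := ContinuousMap.const I x
  map_smul' _ _ := ContinuousMap.ext fun _ => rfl
  map_zero' := ContinuousMap.ext fun _ => rfl
  map_add' _ _ := ContinuousMap.ext fun _ => rfl
  map_mul' _ _ := ContinuousMap.ext fun _ => rfl
  map_star' _ := ContinuousMap.ext fun _ => rfl

/-- constant paths, as a morphism `X ⟶ Cyl X`. -/
def constHom (X : SepRCStar) : X ⟶ Cyl X where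
  toNonUnitalStarAlgHom := constHomAux X
  cont := ContinuousMap.continuous_const'

def postHomAux {X Y : SepRCStar} (φ : X ⟶ Y) :
    C(I, X.carrier) →⋆ₙₐ[ℝ] C(I, Y.carrier) where
  toFun h := ContinuousMap.comp ⟨⇑φ, φ.cont⟩ h
  map_smul' r h := ContinuousMap.ext fun t => hmap_smul φ r (h t)
  map_zero' := ContinuousMap.ext fun _ => hmap_zero φ
  map_add' h h' := ContinuousMap.ext fun t => hmap_add φ (h t) (h' t)
  map_mul' h h' := ContinuousMap.ext fun t => hmap_mul φ (h t) (h' t)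
  map_star' h := ContinuousMap.ext fun t => hmap_star φ (h t)

/-- postcomposition with a morphism, as a morphism `Cyl X ⟶ Cyl Y`. -/
def postHom {X Y : SepRCStar} (φ : X ⟶ Y) : Cyl X ⟶ Cyl Y where
  toNonUnitalStarAlgHom := postHomAux φ
  cont := ContinuousMap.continuous_postcomp _

section Main

variable (E : SES)

def iota : AA E ⟶ DD E :=
  subCorestrict (inclA E ≫ constHom E.snd) (Dsub E) (Dsub_closed E) fun a => a.2

def ev0D : DD E ⟶ E.snd := subIncl (Cyl E.snd) (Dsub E) (Dsub_closed E) ≫ evC E.snd 0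

def ev1D : DD E ⟶ AA E :=
  subCorestrict (subIncl (Cyl E.snd) (Dsub E) (Dsub_closed E) ≫ evC E.snd 1) (Aker E)
    (Aker_closed E) fun h => h.2

def inclN : NN E ⟶ DD E :=
  subCorestrict (subIncl (Cyl E.snd) (Nsub E) (Nsub_closed E)) (Dsub E) (Dsub_closed E)
    fun h => h.2.2

def inclCA : CA0 E ⟶ NN E :=
  subCorestrict (subIncl (Cyl E.snd) (CAsub E) (CAsub_closed E)) (Nsub E) (Nsub_closed E)
    fun h => ⟨h.2.1, h.2.2 1⟩

def Gmap : NN E ⟶ SC E :=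
  subCorestrict (subIncl (Cyl E.snd) (Nsub E) (Nsub_closed E) ≫ postHom E.g) (SCsub E)
    (SCsub_closed E)
    fun h => ⟨by
      show E.g (toCM h.1 0) = 0
      rw [show toCM h.1 0 = 0 from h.2.1]
      exact hmap_zero E.g, h.2.2⟩

variable (s : E.trd ⟶ E.snd)

def scmap : SC E ⟶ NN E :=
  subCorestrict (subIncl (Cyl E.trd) (SCsub E) (SCsub_closed E) ≫ postHom s) (Nsub E)
    (Nsub_closed E)
    fun ℓ => ⟨by
      show s (toCM ℓ.1 0) = 0
      rw [show toCM ℓ.1 0 = 0 from ℓ.2.1]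
      exact hmap_zero s, by
      show E.g (s (toCM ℓ.1 1)) = 0
      rw [show toCM ℓ.1 1 = 0 from ℓ.2.2, hmap_zero s]
      exact hmap_zero E.g⟩

end Main

end SplitAux
namespace SplitAux

section Main

variable (E : SES)

theorem iota_ev0 : iota E ≫ ev0D E = inclA E := RCHom.ext fun _ => rfl

theorem iota_ev1 : iota E ≫ ev1D E = 𝟙 (AA E) := RCHom.ext fun _ => Subtype.ext rfl

variable (s : E.trd ⟶ E.snd)

theorem gs_apply (hs : s ≫ E.g = 𝟙 E.trd) (c : E.trd.carrier) : E.g (s c) = c := DFunLike.congr_fun hs c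

theorem sc_G (hs : s ≫ E.g = 𝟙 E.trd) : scmap E s ≫ Gmap E = 𝟙 (SC E) :=
  RCHom.ext fun ℓ => Subtype.ext (ContinuousMap.ext fun t => gs_apply E s hs (toCM ℓ.1 t))

theorem sc_ev1 : scmap E s ≫ (inclN E ≫ ev1D E) = zto (SC E) ≫ zfrom (AA E) :=
  RCHom.ext fun ℓ => Subtype.ext (by
    show s (toCM ℓ.1 1) = _
    rw [show toCM ℓ.1 1 = 0 from ℓ.2.2, hmap_zero s]
    rfl)

/-- The short exact sequence `0 → N → D → B → 0`. -/
def sesD (hs : s ≫ E.g = 𝟙 E.trd) : SES where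
  fst := NN E
  snd := DD E
  trd := E.snd
  f := inclN E
  g := ev0D E
  inj := fun a b hab => by
    apply Subtype.ext
    exact congrArg (fun z : (DD E).carrier => z.1) hab
  surj := by
    intro b
    refine ⟨⟨ContinuousMap.mk (fun t => b - (t : ℝ) • s (E.g b)) ?_, ?_⟩, ?_⟩
    · exact continuous_const.sub (continuous_subtype_val.smul continuous_const)
    · show E.g (b - ((1 : I) : ℝ) • s (E.g b)) = 0
      rw [show ((1 : I) : ℝ) = 1 from rfl, one_smul, hmap_sub, gs_apply E s hs, sub_self]
    · show b - ((0 : I) : ℝ) • s (E.g b) = b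
      rw [show ((0 : I) : ℝ) = 0 from rfl, zero_smul, sub_zero]
  exactness := by
    intro x
    constructor
    · intro hx
      exact ⟨⟨x.1, ⟨hx, x.2⟩⟩, Subtype.ext rfl⟩
    · rintro ⟨y, rfl⟩
      exact y.2.1

/-- The short exact sequence `0 → CA → N → SC → 0`. -/
def sesG (hs : s ≫ E.g = 𝟙 E.trd) : SES where
  fst := CA0 E
  snd := NN E
  trd := SC E
  f := inclCA E
  g := Gmap E
  inj := fun a b hab => by
    apply Subtype.ext
    exact congrArg (fun z : (NN E).carrier => z.1) hab
  surj := by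
    intro ℓ
    refine ⟨scmap E s ℓ, ?_⟩
    show Gmap E (scmap E s ℓ) = ℓ
    have := DFunLike.congr_fun (sc_G E s hs) ℓ
    exact this
  exactness := by
    intro x
    constructor
    · intro hx
      have hval : ∀ t, E.g (toCM x.1 t) = 0 := by
        intro t
        have h1 := congrArg Subtype.val hx
        exact ContinuousMap.congr_fun h1 t
      exact ⟨⟨x.1, ⟨x.2.1, hval⟩⟩, Subtype.ext rfl⟩
    · rintro ⟨y, rfl⟩
      refine Subtype.ext (ContinuousMap.ext fun t => ?_)
      show E.g (toCM y.1 t) = (0 : C(I, E.trd.carrier)) t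
      rw [ContinuousMap.zero_apply]
      exact y.2.2 t

end Main

end SplitAux
namespace SplitAux

/-- the reparametrisation family `χ u t = (1-u)·t`. -/
def chi : C(I, C(I, I)) :=
  ContinuousMap.curry
    (ContinuousMap.mk (fun p : I × I => ⟨(1 - (p.1 : ℝ)) * (p.2 : ℝ),
      ⟨mul_nonneg (by linarith [unitInterval.le_one p.1]) (unitInterval.nonneg p.2),
        mul_le_one₀ (by linarith [unitInterval.nonneg p.1]) (unitInterval.nonneg p.2)
          (unitInterval.le_one p.2)⟩⟩)
      (by
        apply Continuous.subtype_mk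
        exact ((continuous_const.sub (continuous_subtype_val.comp continuous_fst)).mul
          (continuous_subtype_val.comp continuous_snd))))

theorem chi_apply (u t : I) : ((chi u) t : ℝ) = (1 - (u : ℝ)) * (t : ℝ) := rfl

theorem chi_zero (t : I) : chi 0 t = t := Subtype.ext (by
  rw [chi_apply]
  norm_num)

theorem chi_one (t : I) : chi 1 t = 0 := Subtype.ext (by
  rw [chi_apply]
  norm_num)

/-- reparametrisation, as a morphism `Cyl X ⟶ Cyl (Cyl X)`. -/
def repAux (X : SepRCStar) : C(I, X.carrier) →⋆ₙₐ[ℝ] C(I, C(I, X.carrier)) where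
  toFun h := ContinuousMap.mk (fun u => h.comp (chi u))
    ((ContinuousMap.continuous_postcomp h).comp (map_continuous chi))
  map_smul' r h := ContinuousMap.ext fun u => ContinuousMap.ext fun t => rfl
  map_zero' := ContinuousMap.ext fun u => ContinuousMap.ext fun t => rfl
  map_add' h h' := ContinuousMap.ext fun u => ContinuousMap.ext fun t => rfl
  map_mul' h h' := ContinuousMap.ext fun u => ContinuousMap.ext fun t => rfl
  map_star' h := ContinuousMap.ext fun u => ContinuousMap.ext fun t => rfl

def rep (X : SepRCStar) : Cyl X ⟶ Cyl (Cyl X) where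
  toNonUnitalStarAlgHom := repAux X
  cont := by
    apply ContinuousMap.continuous_of_continuous_uncurry
    exact ContinuousMap.continuous_comp'.comp
      (((map_continuous chi).comp continuous_snd).prodMk continuous_fst)

/-- corestriction of a morphism into a cylinder to the cylinder on a closed subalgebra. -/
def cylCorestrict {W Z : SepRCStar} (K : W ⟶ Cyl Z) (S : NonUnitalStarSubalgebra ℝ Z.carrier)
    (hS : IsClosed (S : Set Z.carrier)) (hmem : ∀ w u, toCM (K w) u ∈ S) :
    W ⟶ Cyl (subAlg Z S hS) where
  toFun w := ContinuousMap.mk (fun u => (⟨toCM (K w) u, hmem w u⟩ : ↥S))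
    ((map_continuous (toCM (K w))).subtype_mk _)
  map_smul' r w := ContinuousMap.ext fun u => Subtype.ext (by
    show toCM (K (r • w)) u = r • toCM (K w) u
    rw [hmap_smul K r w]
    rfl)
  map_zero' := ContinuousMap.ext fun u => Subtype.ext (by
    show toCM (K 0) u = 0
    rw [hmap_zero K]
    rfl)
  map_add' w w' := ContinuousMap.ext fun u => Subtype.ext (by
    show toCM (K (w + w')) u = toCM (K w) u + toCM (K w') u
    rw [hmap_add K w w']
    rfl)
  map_mul' w w' := ContinuousMap.ext fun u => Subtype.ext (by
    show toCM (K (w * w')) u = toCM (K w) u * toCM (K w') u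
    rw [hmap_mul K w w']
    rfl)
  map_star' w := ContinuousMap.ext fun u => Subtype.ext (by
    show toCM (K (star w)) u = star (toCM (K w) u)
    rw [hmap_star K w]
    rfl)
  cont := by
    apply ContinuousMap.continuous_of_continuous_uncurry
    apply Continuous.subtype_mk
    have hK : Continuous fun w => toCM (K w) := K.cont
    exact ContinuousEval.continuous_eval.comp ((hK.comp continuous_fst).prodMk
      continuous_snd)

section Main

variable (E : SES)

/-- the contraction of the cone `CA0`. -/
def contonCA : CA0 E ⟶ Cyl (CA0 E) :=
  cylCorestrict (subIncl (Cyl E.snd) (CAsub E) (CAsub_closed E) ≫ rep E.snd) (CAsub E)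
    (CAsub_closed E)
    (fun w u => ⟨by
      show toCM w.1 (chi u 0) = 0
      rw [show chi u 0 = 0 from Subtype.ext (by rw [chi_apply]; norm_num)]
      exact w.2.1, fun t => by
      show E.g (toCM w.1 (chi u t)) = 0
      exact w.2.2 (chi u t)⟩)

theorem homotopic_id_zero_CA0 :
    Homotopic (𝟙 (CA0 E)) (zto (CA0 E) ≫ zfrom (CA0 E)) := by
  refine ⟨contonCA E, ?_, ?_⟩
  · refine RCHom.ext fun h => Subtype.ext (ContinuousMap.ext fun t => ?_)
    show toCM h.1 (chi 0 t) = toCM h.1 t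
    rw [chi_zero]
  · refine RCHom.ext fun h => Subtype.ext (ContinuousMap.ext fun t => ?_)
    show toCM h.1 (chi 1 t) = (0 : C(I, E.snd.carrier)) t
    rw [chi_one, ContinuousMap.zero_apply]
    exact h.2.1

theorem F_CA0_trivial (F : AbFun) (hhtpy : HomotopyInvariant F) (hhalf : HalfExact F)
    (x : F.obj (CA0 E)) : x = 0 := by
  have h1 := hhtpy _ _ (homotopic_id_zero_CA0 E)
  calc x = F.map (𝟙 (CA0 E)) x := (F_id_apply F x).symm
  _ = F.map (zto (CA0 E) ≫ zfrom (CA0 E)) x := by rw [h1]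
  _ = 0 := F_through_zero F hhalf _ _ x

end Main

end SplitAux
namespace SplitAux

section Main

variable (E : SES)

theorem fres_bij : Function.Bijective ⇑(fres E) := by
  constructor
  · intro a b hab
    apply E.inj
    exact congrArg (fun z : (AA E).carrier => z.1) hab
  · intro b
    obtain ⟨a, ha⟩ := (E.exactness b.1).mp b.2
    exact ⟨a, Subtype.ext ha⟩

/-- `fres` as a continuous linear map, for the open mapping theorem. -/
def fresCLM : E.fst.carrier →L[ℝ] (AA E).carrier where
  toFun := ⇑(fres E)
  map_add' := hmap_add (fres E)
  map_smul' := fun r x => by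
    show fres E (r • x) = r • fres E x
    exact hmap_smul (fres E) r x
  cont := (fres E).cont

set_option maxHeartbeats 1600000 in
/-- By the open mapping theorem, `fres` is a homeomorphism. -/
def fresHomeo : E.fst.carrier ≃ₜ (AA E).carrier :=
  Equiv.toHomeomorphOfContinuousOpen (Equiv.ofBijective _ (fres_bij E)) (fres E).cont
    ((fresCLM E).isOpenMap (fres_bij E).2)

set_option maxHeartbeats 1600000 in
theorem fres_symm_apply (y : (AA E).carrier) : fres E ((fresHomeo E).symm y) = y :=
  (fresHomeo E).apply_symm_apply y

set_option maxHeartbeats 1600000 in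
/-- the inverse of `fres`, as a morphism. -/
def fresInv : AA E ⟶ E.fst where
  toFun := ⇑(fresHomeo E).symm
  map_smul' r x := (fres_bij E).1 (by
    rw [hmap_smul (fres E), fres_symm_apply, fres_symm_apply]; rfl)
  map_zero' := (fres_bij E).1 (by
    rw [hmap_zero (fres E), fres_symm_apply])
  map_add' x y := (fres_bij E).1 (by
    rw [hmap_add (fres E), fres_symm_apply, fres_symm_apply, fres_symm_apply])
  map_mul' x y := (fres_bij E).1 (by
    rw [hmap_mul (fres E), fres_symm_apply, fres_symm_apply, fres_symm_apply])
  map_star' x := (fres_bij E).1 (by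
    rw [hmap_star (fres E), fres_symm_apply, fres_symm_apply])
  cont := (fresHomeo E).continuous_symm

set_option maxHeartbeats 1600000 in
theorem fres_fresInv : fres E ≫ fresInv E = 𝟙 E.fst :=
  RCHom.ext fun a => (fresHomeo E).symm_apply_apply a

end Main

end SplitAux


/-- **Corollary.**  A homotopy invariant, half exact functor on separable real
C*-algebras is split exact. -/
theorem homotopyInvariant_halfExact_splitExact (F : AbFun)
    (hhtpy : HomotopyInvariant F) (hhalf : HalfExact F) :
    SplitExactF F := by
  intro E hsp
  obtain ⟨s, hs⟩ := hsp
  have hker : ∀ z : F.obj E.fst, F.map E.f z = 0 → z = 0 := by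
    intro z hz
    have hA : F.map (SplitAux.inclA E) (F.map (SplitAux.fres E) z) = 0 := by
      rw [← SplitAux.F_comp_apply, SplitAux.fres_incl]; exact hz
    have hev0 : F.map (SplitAux.ev0D E)
        (F.map (SplitAux.iota E) (F.map (SplitAux.fres E) z)) = 0 := by
      rw [← SplitAux.F_comp_apply, SplitAux.iota_ev0]; exact hA
    have hexD : Function.Exact (F.map (SplitAux.inclN E)) (F.map (SplitAux.ev0D E)) :=
      hhalf (SplitAux.sesD E s hs)
    have hexG : Function.Exact (F.map (SplitAux.inclCA E)) (F.map (SplitAux.Gmap E)) :=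
      hhalf (SplitAux.sesG E s hs)
    obtain ⟨w, hw⟩ := (hexD _).mp hev0
    have hGw : w = F.map (SplitAux.scmap E s) (F.map (SplitAux.Gmap E) w) := by
      have hzero : F.map (SplitAux.Gmap E)
          (w - F.map (SplitAux.scmap E s) (F.map (SplitAux.Gmap E) w)) = 0 := by
        rw [map_sub, ← SplitAux.F_comp_apply, SplitAux.sc_G E s hs, SplitAux.F_id_apply,
          sub_self]
      obtain ⟨u, hu⟩ := (hexG _).mp hzero
      rw [SplitAux.F_CA0_trivial E F hhtpy hhalf u, map_zero] at hu
      exact sub_eq_zero.mp hu.symm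
    have hw2 : F.map (SplitAux.inclN E)
        (F.map (SplitAux.scmap E s) (F.map (SplitAux.Gmap E) w)) =
        F.map (SplitAux.iota E) (F.map (SplitAux.fres E) z) := by
      conv_lhs => rw [← hGw]
      exact hw
    have hx1 : F.map (SplitAux.fres E) z = 0 := by
      calc F.map (SplitAux.fres E) z
          = F.map (SplitAux.ev1D E)
            (F.map (SplitAux.iota E) (F.map (SplitAux.fres E) z)) := by
            rw [← SplitAux.F_comp_apply, SplitAux.iota_ev1, SplitAux.F_id_apply]
        _ = F.map (SplitAux.ev1D E) (F.map (SplitAux.inclN E)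
            (F.map (SplitAux.scmap E s) (F.map (SplitAux.Gmap E) w))) := by rw [hw2]
        _ = F.map (SplitAux.scmap E s ≫ (SplitAux.inclN E ≫ SplitAux.ev1D E))
            (F.map (SplitAux.Gmap E) w) := by
            rw [SplitAux.F_comp_apply, SplitAux.F_comp_apply]
        _ = F.map (SplitAux.zto (SplitAux.SC E) ≫ SplitAux.zfrom (SplitAux.AA E))
            (F.map (SplitAux.Gmap E) w) := by rw [SplitAux.sc_ev1 E s]
        _ = 0 := SplitAux.F_through_zero F hhalf _ _ _
    have hzfin : z = F.map (SplitAux.fresInv E) (F.map (SplitAux.fres E) z) := by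
      rw [← SplitAux.F_comp_apply, SplitAux.fres_fresInv, SplitAux.F_id_apply]
    rw [hzfin, hx1, map_zero]
  refine ⟨?_, ?_, hhalf E, ⟨F.map s, by rw [← F.map_comp, hs, F.map_id]⟩⟩
  · intro a b hab
    have h := hker (a - b) (by rw [map_sub, hab, sub_self])
    exact sub_eq_zero.mp h
  · intro y
    exact ⟨F.map s y, by rw [← SplitAux.F_comp_apply, hs, SplitAux.F_id_apply]⟩
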